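/- Let (X,P) be an irreducible Markov chain on a countable state space X such that the associated Markov operator P : ℓ∞(X) → ℓ∞(X), (Pf)(x) = Σ_{y∈X} p(x,y) f(y), is a compact operator. Then (X,P) is positive recurrent. -/

import Mathlib

open scoped Classical ENNReal

noncomputable section

/-- The `n`-step transition probabilities: the entries of the `n`-th matrix power of `p`. -/
def matPow {X : Type*} (p : X → X → ℝ) : ℕ → X → X → ℝ
  | 0 => fun x y => if x = y then 1 else 0
  | n + 1 => fun x y => ∑' z, matPow p n x z * p z y

/-- The first-return probabilities `f⁽ⁿ⁾(x,y)`. -/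
def fret {X : Type*} (p : X → X → ℝ) : ℕ → X → X → ℝ
  | 0 => fun _ _ => 0
  | 1 => fun x y => p x y
  | n + 2 => fun x y => ∑' z, if z = y then 0 else p x z * fret p (n + 1) z y

/-- `p` is a stochastic matrix. -/
def IsStochastic {X : Type*} (p : X → X → ℝ) : Prop :=
  (∀ x y, 0 ≤ p x y) ∧ (∀ x, Summable (p x)) ∧ (∀ x, ∑' y, p x y = 1)

section Aux

variable {X : Type*} (p : X → X → ℝ)

/-- The transition kernel as an `ℝ≥0∞`-valued kernel. -/
def qk (z w : X) : ℝ≥0∞ := ENNReal.ofReal (p z w)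

variable {p}

theorem qk_tsum (hp : IsStochastic p) (z : X) : ∑' w, qk p z w = 1 := by
  have := ENNReal.ofReal_tsum_of_nonneg (fun w => hp.1 z w) (hp.2.1 z)
  rw [hp.2.2 z] at this
  simpa [qk] using this.symm

theorem qk_le_one (hp : IsStochastic p) (z w : X) : qk p z w ≤ 1 :=
  (ENNReal.le_tsum w).trans (qk_tsum hp z).le

theorem fret_nonneg (hp : IsStochastic p) : ∀ n (z y : X), 0 ≤ fret p n z y
  | 0, _, _ => le_refl 0
  | 1, z, y => hp.1 z y
  | n + 2, z, y => by
    rw [fret]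
    refine tsum_nonneg fun w => ?_
    split_ifs with h
    · exact le_refl 0
    · exact mul_nonneg (hp.1 z w) (fret_nonneg hp (n + 1) w y)

theorem fret_le_one (hp : IsStochastic p) : ∀ n (z y : X), fret p n z y ≤ 1
  | 0, _, _ => zero_le_one
  | 1, z, y => by
    have := (hp.2.1 z).le_tsum y (fun w _ => hp.1 z w)
    rw [hp.2.2 z] at this
    simpa [fret] using this
  | n + 2, z, y => by
    rw [fret]
    have hb : ∀ w, (if w = y then (0:ℝ) else p z w * fret p (n+1) w y) ≤ p z w := by
      intro w
      split_ifs with h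
      · exact hp.1 z w
      · exact mul_le_of_le_one_right (hp.1 z w) (fret_le_one hp (n+1) w y)
    have hnn : ∀ w, 0 ≤ (if w = y then (0:ℝ) else p z w * fret p (n+1) w y) := by
      intro w
      split_ifs with h
      · exact le_refl 0
      · exact mul_nonneg (hp.1 z w) (fret_nonneg hp (n+1) w y)
    have hs : Summable (fun w => if w = y then (0:ℝ) else p z w * fret p (n+1) w y) :=
      Summable.of_nonneg_of_le hnn hb (hp.2.1 z)
    calc (∑' w, if w = y then (0:ℝ) else p z w * fret p (n+1) w y)
        ≤ ∑' w, p z w := hs.tsum_le_tsum hb (hp.2.1 z)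
      _ = 1 := hp.2.2 z

theorem fret_summable (hp : IsStochastic p) (n : ℕ) (z y : X) :
    Summable (fun w => if w = y then (0:ℝ) else p z w * fret p (n+1) w y) := by
  refine Summable.of_nonneg_of_le (fun w => ?_) (fun w => ?_) (hp.2.1 z) <;> split_ifs with h
  · exact le_refl 0
  · exact mul_nonneg (hp.1 z w) (fret_nonneg hp (n+1) w y)
  · exact hp.1 z w
  · exact mul_le_of_le_one_right (hp.1 z w) (fret_le_one hp (n+1) w y)

end Aux
section Taboo

variable {X : Type*} (p : X → X → ℝ) (x : X)

/-- taboo kernel avoiding `x`. -/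
def dk (z w : X) : ℝ≥0∞ := if w = x then 0 else qk p z w

/-- survival probabilities: avoid `x` at times `1..n`. -/
def Gsurv : ℕ → X → ℝ≥0∞
  | 0 => fun _ => 1
  | n + 1 => fun z => ∑' w, dk p x z w * Gsurv n w

/-- taboo `n`-step kernel. -/
def Ktab : ℕ → X → X → ℝ≥0∞
  | 0 => fun w z => if z = w then 1 else 0
  | n + 1 => fun w z => ∑' u, dk p x w u * Ktab n u z

/-- `n`-step kernel in `ℝ≥0∞`. -/
def Qpow : ℕ → X → X → ℝ≥0∞
  | 0 => fun w z => if w = z then 1 else 0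
  | n + 1 => fun w z => ∑' u, Qpow n w u * qk p u z

variable {p}

theorem dk_le_qk (z w : X) : dk p x z w ≤ qk p z w := by
  rw [dk]; split_ifs with h
  · exact zero_le
  · exact le_refl _

theorem dk_tsum_le_one (hp : IsStochastic p) (z : X) : ∑' w, dk p x z w ≤ 1 :=
  calc ∑' w, dk p x z w ≤ ∑' w, qk p z w := ENNReal.tsum_le_tsum (dk_le_qk x z)
    _ = 1 := qk_tsum hp z

theorem Gsurv_le_one (hp : IsStochastic p) : ∀ n (z : X), Gsurv p x n z ≤ 1
  | 0, _ => le_refl 1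
  | n + 1, z => by
    simp only [Gsurv]
    calc ∑' w, dk p x z w * Gsurv p x n w
        ≤ ∑' w, dk p x z w * 1 :=
          ENNReal.tsum_le_tsum fun w => mul_le_mul_right (Gsurv_le_one hp n w) _
      _ ≤ 1 := by simpa using dk_tsum_le_one x hp z

theorem Gsurv_succ_le (hp : IsStochastic p) : ∀ n (z : X), Gsurv p x (n+1) z ≤ Gsurv p x n z
  | 0, z => Gsurv_le_one x hp 1 z
  | n + 1, z => by
    simp only [Gsurv]
    exact ENNReal.tsum_le_tsum fun w => mul_le_mul_right (Gsurv_succ_le hp n w) _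

theorem Gsurv_anti (hp : IsStochastic p) {a b : ℕ} (hab : a ≤ b) (z : X) :
    Gsurv p x b z ≤ Gsurv p x a z := by
  induction b, hab using Nat.le_induction with
  | base => exact le_refl _
  | succ n hn ih => exact (Gsurv_succ_le x hp n z).trans ih

theorem Gsurv_eq_tsum_Ktab : ∀ n (w : X), Gsurv p x n w = ∑' z, Ktab p x n w z
  | 0, w => by
    simp only [Gsurv, Ktab]
    exact (tsum_ite_eq w (fun _ => (1:ℝ≥0∞))).symm
  | n + 1, w => by
    simp only [Gsurv, Ktab]
    rw [ENNReal.tsum_comm]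
    exact tsum_congr fun u => by
      rw [ENNReal.tsum_mul_left, Gsurv_eq_tsum_Ktab n u]

theorem Ktab_comp : ∀ (a b : ℕ) (w z : X),
    Ktab p x (a + b) w z = ∑' u, Ktab p x a w u * Ktab p x b u z
  | 0, b, w, z => by
    rw [Nat.zero_add]
    simp only [Ktab]
    refine Eq.symm ((tsum_eq_single w ?_).trans ?_)
    · intro u hu
      simp [hu]
    · simp
  | a + 1, b, w, z => by
    rw [Nat.add_right_comm]
    simp only [Ktab]
    calc (∑' v, dk p x w v * Ktab p x (a + b) v z)
        = ∑' v, dk p x w v * ∑' u, Ktab p x a v u * Ktab p x b u z :=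
          tsum_congr fun v => by rw [Ktab_comp a b v z]
      _ = ∑' v, ∑' u, dk p x w v * (Ktab p x a v u * Ktab p x b u z) :=
          tsum_congr fun v => by rw [ENNReal.tsum_mul_left]
      _ = ∑' u, ∑' v, dk p x w v * (Ktab p x a v u * Ktab p x b u z) := ENNReal.tsum_comm
      _ = ∑' u, (∑' v, dk p x w v * Ktab p x a v u) * Ktab p x b u z := by
          refine tsum_congr fun u => ?_
          rw [← ENNReal.tsum_mul_right]
          exact tsum_congr fun v => by ring

theorem Gsurv_add (a b : ℕ) (w : X) :
    Gsurv p x (a + b) w = ∑' u, Ktab p x a w u * Gsurv p x b u := by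
  rw [Gsurv_eq_tsum_Ktab x (a+b) w]
  calc (∑' z, Ktab p x (a+b) w z)
      = ∑' z, ∑' u, Ktab p x a w u * Ktab p x b u z :=
        tsum_congr fun z => Ktab_comp x a b w z
    _ = ∑' u, ∑' z, Ktab p x a w u * Ktab p x b u z := ENNReal.tsum_comm
    _ = ∑' u, Ktab p x a w u * Gsurv p x b u :=
        tsum_congr fun u => by rw [ENNReal.tsum_mul_left, ← Gsurv_eq_tsum_Ktab]

end Taboo
section Qlem

variable {X : Type*} {p : X → X → ℝ} (x : X)

theorem Qpow_row (hp : IsStochastic p) : ∀ n (w : X), ∑' z, Qpow p n w z = 1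
  | 0, w => by
    simp only [Qpow]
    refine (tsum_eq_single w ?_).trans ?_
    · intro u hu; simp [Ne.symm hu]
    · simp
  | n + 1, w => by
    simp only [Qpow]
    rw [ENNReal.tsum_comm]
    calc (∑' u, ∑' z, Qpow p n w u * qk p u z)
        = ∑' u, Qpow p n w u * ∑' z, qk p u z :=
          tsum_congr fun u => by rw [ENNReal.tsum_mul_left]
      _ = ∑' u, Qpow p n w u := tsum_congr fun u => by rw [qk_tsum hp u, mul_one]
      _ = 1 := Qpow_row hp n w

theorem Qpow_le_one (hp : IsStochastic p) (n : ℕ) (w z : X) : Qpow p n w z ≤ 1 :=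
  (ENNReal.le_tsum z).trans (Qpow_row hp n w).le

theorem Qpow_ne_top (hp : IsStochastic p) (n : ℕ) (w z : X) : Qpow p n w z ≠ ∞ :=
  ((Qpow_le_one hp n w z).trans_lt ENNReal.one_lt_top).ne

theorem Qpow_succ_left (hp : IsStochastic p) :
    ∀ n (w y : X), Qpow p (n+1) w y = ∑' z, qk p w z * Qpow p n z y
  | 0, w, y => by
    simp only [Qpow]
    have h1 : (∑' u, (if w = u then (1:ℝ≥0∞) else 0) * qk p u y) = qk p w y := by
      rw [tsum_eq_single w (fun u hu => by simp [Ne.symm hu])]; simp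
    have h2 : (∑' z, qk p w z * (if z = y then (1:ℝ≥0∞) else 0)) = qk p w y := by
      rw [tsum_eq_single y (fun u hu => by simp [hu])]; simp
    rw [h1, h2]
  | n + 1, w, y => by
    conv_lhs => rw [show Qpow p (n+1+1) w y = ∑' u, Qpow p (n+1) w u * qk p u y from rfl]
    calc (∑' u, Qpow p (n+1) w u * qk p u y)
        = ∑' u, (∑' z, qk p w z * Qpow p n z u) * qk p u y :=
          tsum_congr fun u => by rw [Qpow_succ_left hp n w u]
      _ = ∑' u, ∑' z, qk p w z * Qpow p n z u * qk p u y :=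
          tsum_congr fun u => by rw [ENNReal.tsum_mul_right]
      _ = ∑' z, ∑' u, qk p w z * Qpow p n z u * qk p u y := ENNReal.tsum_comm
      _ = ∑' z, qk p w z * ∑' u, Qpow p n z u * qk p u y := by
          refine tsum_congr fun z => ?_
          rw [← ENNReal.tsum_mul_left]
          exact tsum_congr fun u => by ring
      _ = ∑' z, qk p w z * Qpow p (n+1) z y := rfl

theorem matPow_eq_toReal (hp : IsStochastic p) :
    ∀ n (w y : X), matPow p n w y = (Qpow p n w y).toReal
  | 0, w, y => by
    simp only [matPow, Qpow]
    split_ifs <;> simp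
  | n + 1, w, y => by
    simp only [matPow, Qpow]
    have hne : ∀ u, Qpow p n w u * qk p u y ≠ ∞ :=
      fun u => ENNReal.mul_ne_top (Qpow_ne_top hp n w u) ENNReal.ofReal_ne_top
    rw [ENNReal.tsum_toReal_eq hne]
    refine tsum_congr fun u => ?_
    rw [matPow_eq_toReal hp n w u, ENNReal.toReal_mul]
    congr 1
    exact (ENNReal.toReal_ofReal (hp.1 u y)).symm

theorem Qpow_pos (hp : IsStochastic p) {n : ℕ} {w y : X} (h : 0 < matPow p n w y) :
    0 < Qpow p n w y := by
  rw [matPow_eq_toReal hp n w y] at h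
  exact ENNReal.toReal_pos_iff.1 h |>.1

/-- the crucial disjointness: being at `x` at time `n` and avoiding `x` during `1..n`
are incompatible (for a start `w ≠ x`). -/
theorem Qpow_add_Gsurv_le_one (hp : IsStochastic p) :
    ∀ n, ∀ w : X, w ≠ x → Qpow p n w x + Gsurv p x n w ≤ 1
  | 0, w, hw => by
    simp only [Qpow, Gsurv, if_neg hw, zero_add, le_refl]
  | n + 1, w, hw => by
    rw [Qpow_succ_left hp n w x]
    simp only [Gsurv]
    rw [← ENNReal.tsum_add]
    calc (∑' z, (qk p w z * Qpow p n z x + dk p x w z * Gsurv p x n z))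
        ≤ ∑' z, qk p w z := by
          refine ENNReal.tsum_le_tsum fun z => ?_
          by_cases hz : z = x
          · rw [hz]
            have hd : dk p x w x = 0 := if_pos rfl
            rw [hd, zero_mul, add_zero]
            exact mul_le_of_le_one_right' (Qpow_le_one hp n x x)
          · rw [show dk p x w z = qk p w z from if_neg hz, ← mul_add]
            exact mul_le_of_le_one_right' (Qpow_add_Gsurv_le_one hp n z hz)
      _ = 1 := qk_tsum hp w

end Qlem
section FretG

variable {X : Type*} {p : X → X → ℝ} (x : X)

theorem fret_le_Gsurv (hp : IsStochastic p) :
    ∀ n (z : X), ENNReal.ofReal (fret p (n + 1) z x) ≤ Gsurv p x n z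
  | 0, z => by
    simp only [fret, Gsurv]
    exact qk_le_one hp z x
  | n + 1, z => by
    show ENNReal.ofReal (fret p (n + 2) z x) ≤ _
    rw [show fret p (n + 2) z x = ∑' w, if w = x then 0 else p z w * fret p (n+1) w x from rfl]
    rw [ENNReal.ofReal_tsum_of_nonneg (fun w => ?_) (fret_summable hp n z x)]
    · simp only [Gsurv]
      refine ENNReal.tsum_le_tsum fun w => ?_
      by_cases hw : w = x
      · simp [hw, dk]
      · rw [if_neg hw, show dk p x z w = qk p z w from if_neg hw,
          ENNReal.ofReal_mul (hp.1 z w)]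
        exact mul_le_mul_right (fret_le_Gsurv hp n w) _
    · split_ifs with h
      · exact le_refl 0
      · exact mul_nonneg (hp.1 z w) (fret_nonneg hp (n+1) w x)

end FretG
section Tight

open Filter

set_option synthInstance.maxHeartbeats 1000000 in
set_option maxHeartbeats 1000000 in

theorem exists_tight {X : Type*} [Countable X] [Nonempty X]
    {p : X → X → ℝ} (hp : IsStochastic p)
    (T : lp (fun _ : X => ℝ) ∞ →L[ℝ] lp (fun _ : X => ℝ) ∞)
    (hT : ∀ (f : lp (fun _ : X => ℝ) ∞) (x : X), T f x = ∑' y, p x y * f y)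
    (hcpt : IsCompactOperator T) :
    ∃ F : Finset X, ∀ z : X, (∑' w, if w ∈ F then (0:ℝ) else p z w) ≤ 1/2 := by
  obtain ⟨g, hg⟩ := exists_surjective_nat X
  set F : ℕ → Finset X := fun n => (Finset.range (n+1)).image g with hF
  have hFmono : Monotone F := fun a b hab =>
    Finset.image_subset_image (Finset.range_subset_range.2 (by omega))
  have hFexh : ∀ z : X, ∃ n, z ∈ F n := by
    intro z
    obtain ⟨n, rfl⟩ := hg z
    exact ⟨n, Finset.mem_image_of_mem g (Finset.mem_range.2 (Nat.lt_succ_self n))⟩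
  have hmem : ∀ n, Memℓp (fun w => if w ∈ F n then (0:ℝ) else 1) ∞ := fun n =>
    memℓp_infty ⟨1, by rintro r ⟨w, rfl⟩; dsimp; split_ifs <;> simp⟩
  set e : ℕ → lp (fun _ : X => ℝ) ∞ :=
    fun n => ⟨fun w => if w ∈ F n then (0:ℝ) else 1, hmem n⟩ with he
  have he_norm : ∀ n, ‖e n‖ ≤ 1 := by
    intro n
    refine lp.norm_le_of_forall_le zero_le_one fun w => ?_
    show ‖if w ∈ F n then (0:ℝ) else 1‖ ≤ 1
    split_ifs <;> simp
  obtain ⟨K, hK, hKmem⟩ := hcpt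
  obtain ⟨r, hr, hball⟩ := Metric.mem_nhds_iff.1 hKmem
  set c : ℝ := r/2 with hc
  have hc0 : 0 < c := by positivity
  have hin : ∀ n, T (c • e n) ∈ K := by
    intro n
    apply hball
    rw [Metric.mem_ball, dist_zero_right, norm_smul]
    calc ‖c‖ * ‖e n‖ ≤ c * 1 := by
          rw [Real.norm_of_nonneg hc0.le]
          exact mul_le_mul_of_nonneg_left (he_norm n) hc0.le
      _ < r := by rw [mul_one, hc]; linarith
  obtain ⟨a, -, φ, hφ, hconv⟩ := hK.tendsto_subseq hin
  have hval : ∀ n z, T (c • e n) z = c * ∑' w, if w ∈ F n then (0:ℝ) else p z w := by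
    intro n z
    rw [hT, ← tsum_mul_left]
    refine tsum_congr fun w => ?_
    have hcoe : (c • e n : lp (fun _ : X => ℝ) ∞) w = c * (if w ∈ F n then (0:ℝ) else 1) := by
      rw [lp.coeFn_smul]; rfl
    rw [hcoe]
    split_ifs <;> ring
  -- pointwise convergence of the full sequence to 0
  have hlim : ∀ z, Tendsto (fun n => T (c • e n) z) atTop (nhds 0) := by
    intro z
    have h1 : Tendsto (fun s : Finset X => ∑' w : {w // w ∉ s}, p z w) atTop (nhds 0) :=
      tendsto_tsum_compl_atTop_zero (p z)
    have h2 := (h1.comp (tendsto_atTop_finset_of_monotone hFmono hFexh)).const_mul c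
    rw [mul_zero] at h2
    refine Tendsto.congr (fun n => ?_) h2
    rw [hval n z]
    congr 1
    have hsub : (∑' w : {w : X | w ∉ F n}, p z w) = ∑' x, Set.indicator {w : X | w ∉ F n} (p z) x :=
      tsum_subtype {w : X | w ∉ F n} (p z)
    calc ((fun s : Finset X => ∑' w : {w // w ∉ s}, p z (w:X)) ∘ F) n
        = ∑' x, Set.indicator {w : X | w ∉ F n} (p z) x := hsub
      _ = ∑' w, (if w ∈ F n then (0:ℝ) else p z w) := by
          refine tsum_congr fun w => ?_
          by_cases hw : w ∈ F n <;> simp [Set.indicator_apply, hw]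
  -- the limit along the subsequence is 0
  have ha : a = 0 := by
    refine lp.ext (funext fun z => ?_)
    have h1 : Tendsto (fun k => T (c • e (φ k)) z) atTop (nhds (a z)) := by
      have hdist : ∀ k, dist (T (c • e (φ k)) z) (a z) ≤ dist (T (c • e (φ k))) a := by
        intro k
        rw [dist_eq_norm, dist_eq_norm]
        have := lp.norm_apply_le_norm ENNReal.top_ne_zero (T (c • e (φ k)) - a) z
        exact this
      refine tendsto_iff_dist_tendsto_zero.2 ?_
      exact squeeze_zero (fun k => dist_nonneg) hdist
        (by simpa using hconv.dist (tendsto_const_nhds (x := a)))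
    have h2 : Tendsto (fun k => T (c • e (φ k)) z) atTop (nhds 0) :=
      (hlim z).comp hφ.tendsto_atTop
    exact tendsto_nhds_unique h1 h2
  rw [ha] at hconv
  have hev : ∀ᶠ k in atTop, ‖T (c • e (φ k))‖ < c/2 :=
    (tendsto_order.1 (by simpa using hconv.norm)).2 _ (by positivity)
  obtain ⟨k, hk⟩ := hev.exists
  refine ⟨F (φ k), fun z => ?_⟩
  have h3 : |T (c • e (φ k)) z| ≤ ‖T (c • e (φ k))‖ := by
    have h := lp.norm_apply_le_norm ENNReal.top_ne_zero (T (c • e (φ k))) z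
    rwa [Real.norm_eq_abs] at h
  have h4 : c * (∑' w, if w ∈ F (φ k) then (0:ℝ) else p z w) ≤ c/2 := by
    calc c * (∑' w, if w ∈ F (φ k) then (0:ℝ) else p z w)
        ≤ |c * (∑' w, if w ∈ F (φ k) then (0:ℝ) else p z w)| := le_abs_self _
      _ = |T (c • e (φ k)) z| := by rw [hval (φ k) z]
      _ ≤ ‖T (c • e (φ k))‖ := h3
      _ ≤ c/2 := hk.le
  by_contra hcon
  push_neg at hcon
  have := mul_lt_mul_of_pos_left hcon hc0
  nlinarith

end Tight
set_option maxHeartbeats 1000000 in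
/-- if the Markov operator on `ℓ∞(X)` of an irreducible chain is compact,
then the chain is positive recurrent. -/
theorem compact_markov_operator_positive_recurrent {X : Type*} [Countable X]
    (p : X → X → ℝ) (hp : IsStochastic p)
    (hirr : ∀ x y : X, ∃ n : ℕ, 0 < matPow p n x y)
    (T : lp (fun _ : X => ℝ) ∞ →L[ℝ] lp (fun _ : X => ℝ) ∞)
    (hT : ∀ (f : lp (fun _ : X => ℝ) ∞) (x : X), T f x = ∑' y, p x y * f y)
    (hcpt : IsCompactOperator T) :
    ∀ x : X, Summable (fun n : ℕ => (n : ℝ) * fret p n x x) := by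
  intro x
  have : Nonempty X := ⟨x⟩
  obtain ⟨F₀, hF₀⟩ := exists_tight hp T hT hcpt
  set F : Finset X := insert x F₀ with hF
  have hxF : x ∈ F := Finset.mem_insert_self x F₀
  set ε : ℝ≥0∞ := ENNReal.ofReal (1/2) with hε
  have hε1 : ε < 1 := by rw [hε]; exact ENNReal.ofReal_lt_one.2 (by norm_num)
  have hε0 : ε ≠ 0 := by rw [hε]; simp [ENNReal.ofReal_eq_zero]
  -- tail bound in ℝ≥0∞
  have htail : ∀ z, (∑' w, if w ∈ F then (0:ℝ≥0∞) else qk p z w) ≤ ε := by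
    intro z
    have hnn : ∀ w, 0 ≤ (if w ∈ F₀ then (0:ℝ) else p z w) := by
      intro w; split_ifs; exacts [le_refl 0, hp.1 z w]
    have hsum : Summable (fun w => if w ∈ F₀ then (0:ℝ) else p z w) := by
      refine Summable.of_nonneg_of_le hnn (fun w => ?_) (hp.2.1 z)
      split_ifs; exacts [hp.1 z w, le_refl _]
    have h1 : (∑' w, if w ∈ F then (0:ℝ≥0∞) else qk p z w)
        ≤ ∑' w, if w ∈ F₀ then (0:ℝ≥0∞) else qk p z w := by
      refine ENNReal.tsum_le_tsum fun w => ?_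
      by_cases h0 : w ∈ F₀
      · simp [h0, hF, Finset.mem_insert_of_mem h0]
      · split_ifs <;> simp
    have h2 : (∑' w, if w ∈ F₀ then (0:ℝ≥0∞) else qk p z w)
        = ENNReal.ofReal (∑' w, if w ∈ F₀ then (0:ℝ) else p z w) := by
      rw [ENNReal.ofReal_tsum_of_nonneg hnn hsum]
      refine tsum_congr fun w => ?_
      split_ifs
      · simp
      · rfl
    refine h1.trans ?_
    rw [h2, hε]
    exact ENNReal.ofReal_le_ofReal (hF₀ z)
  -- the uniform hitting bound on F
  set nw : X → ℕ := fun w => (hirr w x).choose with hnwdef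
  have hnw_pos : ∀ w, 0 < matPow p (nw w) w x := fun w => (hirr w x).choose_spec
  set v : X → ℝ≥0∞ := fun w => Qpow p (nw w) w x with hv
  have hvpos : ∀ w, 0 < v w := fun w => Qpow_pos hp (hnw_pos w)
  set δ : ℝ≥0∞ := F.inf' ⟨x, hxF⟩ v with hδ
  have hδpos : 0 < δ := (Finset.lt_inf'_iff _).2 fun b _ => hvpos b
  have hδ1 : δ ≤ 1 := (Finset.inf'_le v hxF).trans (Qpow_le_one hp _ x x)
  set m : ℕ := F.sup nw with hm
  have hGF : ∀ w ∈ F, w ≠ x → Gsurv p x m w ≤ 1 - δ := by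
    intro w hw hwx
    have h1 : Gsurv p x m w ≤ Gsurv p x (nw w) w := Gsurv_anti x hp (Finset.le_sup hw) w
    have h2 : Gsurv p x (nw w) w ≤ 1 - Qpow p (nw w) w x :=
      ENNReal.le_sub_of_add_le_left (Qpow_ne_top hp _ w x)
        (Qpow_add_Gsurv_le_one x hp (nw w) w hwx)
    exact h1.trans (h2.trans (tsub_le_tsub_left (Finset.inf'_le v hw) 1))
  set ρ : ℝ≥0∞ := (1 - δ) + δ * ε with hρ
  have hρ1 : ρ < 1 := by
    have h1 : δ * ε < δ * 1 :=
      ENNReal.mul_lt_mul_right hδpos.ne' (ne_top_of_le_ne_top ENNReal.one_ne_top hδ1) hε1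
    calc ρ < (1 - δ) + δ * 1 :=
          ENNReal.add_lt_add_left (ne_top_of_le_ne_top ENNReal.one_ne_top tsub_le_self) h1
      _ = 1 := by rw [mul_one, tsub_add_cancel_of_le hδ1]
  have hρ0 : 0 < ρ := by
    have : 0 < δ * ε := ENNReal.mul_pos hδpos.ne' hε0
    exact this.trans_le (le_add_self)
  have hρtop : ρ ≠ ∞ := (hρ1.trans ENNReal.one_lt_top).ne
  -- one-block contraction
  have hkey : ∀ z, Gsurv p x (m+1) z ≤ ρ := by
    intro z
    have hptw : ∀ w, dk p x z w * Gsurv p x m w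
        ≤ (1 - δ) * dk p x z w + δ * (if w ∈ F then 0 else dk p x z w) := by
      intro w
      by_cases hwx : w = x
      · have : dk p x z w = 0 := by rw [dk, if_pos hwx]
        rw [this, zero_mul]
        exact zero_le
      · by_cases hwF : w ∈ F
        · rw [if_pos hwF, mul_zero, add_zero]
          calc dk p x z w * Gsurv p x m w ≤ dk p x z w * (1 - δ) :=
                mul_le_mul_right (hGF w hwF hwx) _
            _ = (1 - δ) * dk p x z w := mul_comm _ _
        · rw [if_neg hwF]
          calc dk p x z w * Gsurv p x m w ≤ dk p x z w * 1 :=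
                mul_le_mul_right (Gsurv_le_one x hp m w) _
            _ = ((1 - δ) + δ) * dk p x z w := by rw [mul_one, tsub_add_cancel_of_le hδ1, one_mul]
            _ = (1 - δ) * dk p x z w + δ * dk p x z w := by rw [add_mul]
    have htail' : (∑' w, if w ∈ F then (0:ℝ≥0∞) else dk p x z w) ≤ ε := by
      refine le_trans (ENNReal.tsum_le_tsum fun w => ?_) (htail z)
      split_ifs
      · exact le_refl 0
      · exact dk_le_qk x z w
    calc Gsurv p x (m+1) z = ∑' w, dk p x z w * Gsurv p x m w := rfl
      _ ≤ ∑' w, ((1 - δ) * dk p x z w + δ * (if w ∈ F then 0 else dk p x z w)) :=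
          ENNReal.tsum_le_tsum hptw
      _ = (1-δ) * (∑' w, dk p x z w) + δ * ∑' w, (if w ∈ F then (0:ℝ≥0∞) else dk p x z w) := by
          rw [ENNReal.tsum_add, ENNReal.tsum_mul_left, ENNReal.tsum_mul_left]
      _ ≤ (1-δ) * 1 + δ * ε :=
          add_le_add (mul_le_mul_right (dk_tsum_le_one x hp z) _) (mul_le_mul_right htail' _)
      _ = ρ := by rw [mul_one]
  -- iterate
  have hdecay : ∀ n, Gsurv p x (n + (m+1)) x ≤ ρ * Gsurv p x n x := by
    intro n
    rw [Gsurv_add x n (m+1) x]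
    calc (∑' u, Ktab p x n x u * Gsurv p x (m+1) u)
        ≤ ∑' u, Ktab p x n x u * ρ :=
          ENNReal.tsum_le_tsum fun u => mul_le_mul_right (hkey u) _
      _ = (∑' u, Ktab p x n x u) * ρ := ENNReal.tsum_mul_right
      _ = ρ * Gsurv p x n x := by rw [← Gsurv_eq_tsum_Ktab, mul_comm]
  have hgeo : ∀ n, Gsurv p x n x ≤ ρ ^ (n / (m+1)) := by
    intro n
    induction n using Nat.strong_induction_on with
    | _ n ih =>
      by_cases h : n < m + 1
      · rw [Nat.div_eq_of_lt h, pow_zero]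
        exact Gsurv_le_one x hp n x
      · push_neg at h
        have h2 : n - (m+1) + (m+1) = n := Nat.sub_add_cancel h
        have h3 : n / (m+1) = (n - (m+1))/(m+1) + 1 := Nat.div_eq_sub_div (Nat.succ_pos m) h
        rw [h3, pow_succ]
        calc Gsurv p x n x = Gsurv p x ((n - (m+1)) + (m+1)) x := by rw [h2]
          _ ≤ ρ * Gsurv p x (n-(m+1)) x := hdecay _
          _ ≤ ρ * ρ^((n-(m+1))/(m+1)) := mul_le_mul_right (ih _ (by omega)) _
          _ = ρ^((n-(m+1))/(m+1)) * ρ := mul_comm _ _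
  -- pass to the reals
  set M : ℕ := m + 1 with hM
  set r : ℝ := ρ.toReal with hr
  have hr0 : 0 < r := ENNReal.toReal_pos hρ0.ne' hρtop
  have hr1 : r < 1 := by
    have := (ENNReal.toReal_lt_toReal hρtop ENNReal.one_ne_top).2 hρ1
    simpa using this
  have hfb : ∀ n : ℕ, fret p (n+1) x x ≤ r ^ (n / M) := by
    intro n
    have h1 : ENNReal.ofReal (fret p (n+1) x x) ≤ ρ ^ (n / M) :=
      (fret_le_Gsurv x hp n x).trans (hgeo n)
    have h2 := ENNReal.toReal_mono (ENNReal.pow_ne_top hρtop) h1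
    rwa [ENNReal.toReal_ofReal (fret_nonneg hp _ x x), ENNReal.toReal_pow] at h2
  set t : ℝ := r ^ ((M:ℝ)⁻¹) with ht
  have hM0 : (0:ℝ) < M := by positivity
  have ht1 : t < 1 := Real.rpow_lt_one hr0.le hr1 (by positivity)
  have ht0 : 0 ≤ t := Real.rpow_nonneg hr0.le _
  have hrt : ∀ n : ℕ, r ^ (n / M) ≤ r⁻¹ * t ^ n := by
    intro n
    have e1 : (t : ℝ) ^ n = r ^ ((M:ℝ)⁻¹ * n) := by
      rw [ht, ← Real.rpow_natCast (r ^ ((M:ℝ)⁻¹)) n, ← Real.rpow_mul hr0.le]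
    have e2 : r⁻¹ = r ^ (-1 : ℝ) := (Real.rpow_neg_one r).symm
    have e3 : r ^ (n / M) = r ^ (((n / M : ℕ) : ℝ)) := (Real.rpow_natCast r (n / M)).symm
    rw [e1, e2, e3, ← Real.rpow_add hr0]
    apply Real.rpow_le_rpow_of_exponent_ge hr0 hr1.le
    have h4 : (n:ℝ) < ((n / M : ℕ) : ℝ) * M + M := by
      have hmod := Nat.div_add_mod n M
      have hlt : n % M < M := Nat.mod_lt n (Nat.succ_pos m)
      have : (M:ℝ) * ((n / M : ℕ) : ℝ) + ((n % M : ℕ) : ℝ) = (n:ℝ) := by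
        exact_mod_cast congrArg (fun k : ℕ => (k : ℝ)) hmod
      have hlt' : ((n % M : ℕ) : ℝ) < (M:ℝ) := by exact_mod_cast hlt
      nlinarith
    have h5 : (M:ℝ)⁻¹ * n < ((n / M : ℕ) : ℝ) + 1 := by
      rw [inv_mul_eq_div, div_lt_iff₀ hM0]
      linarith
    linarith
  have hmaj : Summable (fun n : ℕ => ((n:ℝ)+1) * (r⁻¹ * t^n)) := by
    have h1 : Summable (fun n : ℕ => (n:ℝ) * t^n) := by
      have := summable_pow_mul_geometric_of_norm_lt_one 1
        (r := t) (by rwa [Real.norm_eq_abs, abs_of_nonneg ht0])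
      simpa using this
    have h2 : Summable (fun n : ℕ => t^n) := summable_geometric_of_lt_one ht0 ht1
    refine ((h1.add h2).mul_left r⁻¹).congr fun n => ?_
    ring
  rw [← summable_nat_add_iff 1]
  refine Summable.of_nonneg_of_le (fun n => ?_) (fun n => ?_) hmaj
  · exact mul_nonneg (Nat.cast_nonneg _) (fret_nonneg hp _ x x)
  · have h6 : fret p (n+1) x x ≤ r⁻¹ * t^n := (hfb n).trans (hrt n)
    calc ((n+1:ℕ):ℝ) * fret p (n+1) x x ≤ ((n+1:ℕ):ℝ) * (r⁻¹ * t^n) :=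
          mul_le_mul_of_nonneg_left h6 (Nat.cast_nonneg _)
      _ = ((n:ℝ)+1) * (r⁻¹*t^n) := by push_cast; ring
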